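/- arXiv:1807.00887 — 4 statements merged into one kernel-verified Lean document; each statement's English description precedes it below -/
import Mathlib

section
/- Let V be a finite dimensional real vector space, and let V1, V2 ⊆ V be subspaces with V1 + V2 = V and V2 of codimension 1 in V. Let Ṽ2 ⊆ V2 be an arbitrary subspace, let A : V1 → V1 and α : V2 → V be linear maps, and define the subspaces W1 = {(u1, A(u1) + w̃) : u1 ∈ V1, w̃ ∈ Ṽ2} ⊆ V × V, W2 = {(u2, v2 + α(u2)) : u2, v2 ∈ V2} ⊆ V × V, and 𝒜 = {A(w) − α(w) : w ∈ V1 ∩ V2} ⊆ V. Then W1 + W2 = V × V if and only if 𝒜 is not contained in V2. -/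
lemma aux_exists_smul {V : Type*} [AddCommGroup V] [Module ℝ V] [FiniteDimensional ℝ V]
    (V2 : Submodule ℝ V) (hcodim : Module.finrank ℝ (V ⧸ V2) = 1)
    (x0 : V) (hx0 : x0 ∉ V2) (c : V) : ∃ t : ℝ, c - t • x0 ∈ V2 := by
  have hq0 : V2.mkQ x0 ≠ 0 := by
    simpa [Submodule.mkQ_apply, Submodule.Quotient.mk_eq_zero] using hx0
  have hspan : Submodule.span ℝ {V2.mkQ x0} = ⊤ := by
    apply Submodule.eq_top_of_finrank_eq
    rw [finrank_span_singleton hq0, hcodim]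
  have hmem : V2.mkQ c ∈ Submodule.span ℝ {V2.mkQ x0} := by rw [hspan]; trivial
  obtain ⟨t, ht⟩ := Submodule.mem_span_singleton.1 hmem
  refine ⟨t, ?_⟩
  have h0 : V2.mkQ (c - t • x0) = 0 := by
    rw [map_sub, map_smul, ht, sub_self]
  rwa [Submodule.mkQ_apply, Submodule.Quotient.mk_eq_zero] at h0

/-- Lemma on transversality, linear algebra form: `V` finite dimensional real
vector space, `V1 + V2 = V`, `V2` of codimension 1, `Vt ⊆ V2` an arbitrary subspace,
`A : V1 → V1` and `α : V2 → V` linear. With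
`W1 = {(u1, A u1 + w) : u1 ∈ V1, w ∈ Vt}`, `W2 = {(u2, v2 + α u2) : u2, v2 ∈ V2}` and
`𝒜 = {A w - α w : w ∈ V1 ∩ V2}`, one has `W1 + W2 = V × V` iff `𝒜 ⊄ V2`. -/
theorem sum_eq_top_iff_not_subset
    {V : Type*} [AddCommGroup V] [Module ℝ V] [FiniteDimensional ℝ V]
    (V1 V2 Vt : Submodule ℝ V)
    (hsum : V1 ⊔ V2 = ⊤)
    (hcodim : Module.finrank ℝ (V ⧸ V2) = 1)
    (hVt : Vt ≤ V2)
    (A : V1 →ₗ[ℝ] V1) (α : V2 →ₗ[ℝ] V)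
    (W1 W2 : Set (V × V)) (𝒜 : Set V)
    (hW1 : W1 = {p | ∃ u1 : V1, ∃ w ∈ Vt, p = ((u1 : V), (A u1 : V) + w)})
    (hW2 : W2 = {p | ∃ u2 v2 : V2, p = ((u2 : V), (v2 : V) + α u2)})
    (h𝒜 : 𝒜 = {x | ∃ (w : V) (h1 : w ∈ V1) (h2 : w ∈ V2),
      x = (A ⟨w, h1⟩ : V) - α ⟨w, h2⟩}) :
    (∀ z : V × V, ∃ w1 ∈ W1, ∃ w2 ∈ W2, z = w1 + w2) ↔ ¬ (𝒜 ⊆ (V2 : Set V)) := by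
  subst hW1 hW2 h𝒜
  constructor
  · intro hall hsub
    have hnt : Nontrivial (V ⧸ V2) := by
      rw [← Module.finrank_pos_iff (R := ℝ)]; omega
    obtain ⟨q, hq⟩ := exists_ne (0 : V ⧸ V2)
    obtain ⟨e, rfl⟩ := V2.mkQ_surjective q
    have he : e ∉ V2 := by
      simpa [Submodule.mkQ_apply, Submodule.Quotient.mk_eq_zero] using hq
    obtain ⟨p1, ⟨u1, w, hw, hp1⟩, p2, ⟨u2, v2, hp2⟩, hz⟩ := hall (0, e)
    rw [hp1, hp2] at hz
    have h1 : (0 : V) = (u1 : V) + u2 := congrArg Prod.fst hz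
    have h2 : e = ((A u1 : V) + w) + ((v2 : V) + α u2) := congrArg Prod.snd hz
    have hmem : (u1 : V) ∈ V2 := by
      have h1' : (u1 : V) = -(u2 : V) := eq_neg_of_add_eq_zero_left h1.symm
      rw [h1']; exact neg_mem u2.2
    have hu2 : u2 = -(⟨(u1 : V), hmem⟩ : V2) := by
      ext
      simpa using eq_neg_of_add_eq_zero_right h1.symm
    have hxA : ((A u1 : V) - α ⟨(u1 : V), hmem⟩)
        ∈ {x | ∃ (w : V) (h1 : w ∈ V1) (h2 : w ∈ V2),
          x = (A ⟨w, h1⟩ : V) - α ⟨w, h2⟩} :=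
      ⟨(u1 : V), u1.2, hmem, rfl⟩
    have hxV2 : ((A u1 : V) - α ⟨(u1 : V), hmem⟩) ∈ V2 := hsub hxA
    apply he
    have heq : e = ((A u1 : V) - α ⟨(u1 : V), hmem⟩) + (w + v2) := by
      rw [h2, hu2, map_neg]; abel
    rw [heq]
    exact add_mem hxV2 (add_mem (hVt hw) v2.2)
  · intro hns z
    obtain ⟨x0, hx0A, hx0⟩ := Set.not_subset.1 hns
    obtain ⟨w0, hw01, hw02, hx0eq⟩ := hx0A
    obtain ⟨a1, ha1, a2, ha2, hadd⟩ := Submodule.mem_sup.1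
      (show z.1 ∈ V1 ⊔ V2 from hsum ▸ Submodule.mem_top)
    set c := z.2 - (A ⟨a1, ha1⟩ : V) - α ⟨a2, ha2⟩ with hc_def
    obtain ⟨t, hc⟩ := aux_exists_smul V2 hcodim x0 hx0 c
    set u1 : V1 := ⟨a1, ha1⟩ + t • ⟨w0, hw01⟩ with hu1
    set u2 : V2 := ⟨a2, ha2⟩ - t • ⟨w0, hw02⟩ with hu2
    refine ⟨((u1 : V), (A u1 : V) + 0), ⟨u1, 0, zero_mem _, rfl⟩,
      ((u2 : V), ((⟨c - t • x0, hc⟩ : V2) : V) + α u2), ⟨u2, ⟨c - t • x0, hc⟩, rfl⟩, ?_⟩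
    have hfst : z.1 = (u1 : V) + (u2 : V) := by
      simp only [hu1, hu2, Submodule.coe_add, Submodule.coe_sub, SetLike.val_smul]
      rw [← hadd]; abel
    have hsnd : z.2 = ((A u1 : V) + 0) + ((c - t • x0) + α u2) := by
      simp only [hu1, hu2, map_add, map_sub, map_smul, Submodule.coe_add,
        Submodule.coe_sub, SetLike.val_smul, hc_def, hx0eq]
      module
    exact Prod.ext hfst hsnd
end

section
/- Let V be a finite dimensional real vector space, and let V1, V2 ⊆ V be subspaces with V1 + V2 = V and V2 of codimension 1 in V. Let v ∈ V2, let A : V1 → V1 and α : V2 → V be linear maps, and define W1 = {(u1, A(u1) + λ·v) : u1 ∈ V1, λ ∈ ℝ} ⊆ V × V, W2 = {(u2, v2 + α(u2)) : u2, v2 ∈ V2} ⊆ V × V, and 𝒜 = {A(w) − α(w) : w ∈ V1 ∩ V2} ⊆ V. Then for all z, z' ∈ V and any decomposition z = u1 + u2 with u1 ∈ V1 and u2 ∈ V2, the pair (z, z') belongs to W1 + W2 if and only if z' belongs to the affine subspace A(u1) + α(u2) + 𝒜 + V2 of V. -/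
/-- first part of Proposition on transversality, linear algebra form:
with `W1 = {(u1, A u1 + λ•v)}`, `W2 = {(u2, v2 + α u2)}`, `𝒜 = {A w - α w : w ∈ V1 ∩ V2}`,
for any `z, z'` and any decomposition `z = u1 + u2` with `u1 ∈ V1`, `u2 ∈ V2`, the pair
`(z, z')` belongs to `W1 + W2` iff `z'` lies in the affine subspace
`A u1 + α u2 + 𝒜 + V2`. -/
theorem mem_sum_iff_mem_affine_subspace
    {V : Type*} [AddCommGroup V] [Module ℝ V] [FiniteDimensional ℝ V]
    (V1 V2 : Submodule ℝ V)
    (hsum : V1 ⊔ V2 = ⊤)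
    (hcodim : Module.finrank ℝ (V ⧸ V2) = 1)
    (v : V) (hv : v ∈ V2)
    (A : V1 →ₗ[ℝ] V1) (α : V2 →ₗ[ℝ] V)
    (W1 W2 : Set (V × V)) (𝒜 : Set V)
    (hW1 : W1 = {p | ∃ (u1 : V1) (l : ℝ), p = ((u1 : V), (A u1 : V) + l • v)})
    (hW2 : W2 = {p | ∃ u2 v2 : V2, p = ((u2 : V), (v2 : V) + α u2)})
    (h𝒜 : 𝒜 = {x | ∃ (w : V) (h1 : w ∈ V1) (h2 : w ∈ V2),
      x = (A ⟨w, h1⟩ : V) - α ⟨w, h2⟩}) :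
    ∀ (z z' : V) (u1 : V1) (u2 : V2), z = (u1 : V) + (u2 : V) →
      ((∃ w1 ∈ W1, ∃ w2 ∈ W2, (z, z') = w1 + w2) ↔
        ∃ a ∈ 𝒜, ∃ t ∈ V2, z' = (A u1 : V) + α u2 + a + t) := by
  subst hW1 hW2 h𝒜
  intro z z' u1 u2 hz
  constructor
  · rintro ⟨w1, ⟨a1, l, rfl⟩, w2, ⟨b2, c2, rfl⟩, heq⟩
    rw [Prod.mk_add_mk, Prod.mk.injEq] at heq
    obtain ⟨h1, h2⟩ := heq
    have key : (a1 : V) - u1 = (u2 : V) - b2 := by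
      rw [sub_eq_sub_iff_add_eq_add]
      exact (hz.symm.trans h1).symm.trans (add_comm _ _)
    have hw1 : ((a1 : V) - u1) ∈ V1 := sub_mem a1.2 u1.2
    have hw2 : ((a1 : V) - u1) ∈ V2 := by rw [key]; exact sub_mem u2.2 b2.2
    refine ⟨(A ⟨(a1 : V) - u1, hw1⟩ : V) - α ⟨(a1 : V) - u1, hw2⟩,
      ⟨_, hw1, hw2, rfl⟩, l • v + c2, add_mem (V2.smul_mem l hv) c2.2, ?_⟩
    have e1 : (⟨(a1 : V) - u1, hw1⟩ : V1) = a1 - u1 := rfl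
    have e2 : (⟨(a1 : V) - u1, hw2⟩ : V2) = u2 - b2 := Subtype.ext key
    rw [e1, e2, map_sub, map_sub, h2]
    push_cast
    abel
  · rintro ⟨a, ⟨w, hw1, hw2, rfl⟩, t, ht, rfl⟩
    refine ⟨((u1 + ⟨w, hw1⟩ : V1), (A (u1 + ⟨w, hw1⟩) : V) + (0 : ℝ) • v),
      ⟨u1 + ⟨w, hw1⟩, 0, rfl⟩,
      ((u2 - ⟨w, hw2⟩ : V2), ((⟨t, ht⟩ : V2) : V) + α (u2 - ⟨w, hw2⟩)),
      ⟨u2 - ⟨w, hw2⟩, ⟨t, ht⟩, rfl⟩, ?_⟩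
    rw [Prod.mk_add_mk, Prod.mk.injEq]
    constructor
    · push_cast
      rw [hz]; abel
    · rw [map_add, map_sub]
      push_cast
      rw [zero_smul, add_zero]
      abel
end

section
/- Let V be a finite dimensional real vector space, and let V1, V2 ⊆ V be subspaces with V1 + V2 = V and V2 of codimension 1 in V. Let v ∈ V2, let A : V1 → V1 and α : V2 → V be linear maps, and define W1 = {(u1, A(u1) + λ·v) : u1 ∈ V1, λ ∈ ℝ} ⊆ V × V, W2 = {(u2, v2 + α(u2)) : u2, v2 ∈ V2} ⊆ V × V, and 𝒜 = {A(w) − α(w) : w ∈ V1 ∩ V2} ⊆ V. If 𝒜 ⊆ V2 (equivalently, if W1 + W2 ≠ V × V), then the subspace W1 + W2 has codimension 1 in V × V. -/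
/-- in the setting of the transversality lemma, if `𝒜 ⊆ V2`
(equivalently `W1 + W2 ≠ V × V`), then the subspace `W1 + W2` has codimension 1 in
`V × V`. Here the subspace `W1 + W2` is realized as the span of `W1 ∪ W2` (which
coincides with the sum, since `W1` and `W2` are subspaces). -/
theorem codim_one_of_not_transversal
    {V : Type*} [AddCommGroup V] [Module ℝ V] [FiniteDimensional ℝ V]
    (V1 V2 : Submodule ℝ V)
    (hsum : V1 ⊔ V2 = ⊤)
    (hcodim : Module.finrank ℝ (V ⧸ V2) = 1)
    (v : V) (hv : v ∈ V2)
    (A : V1 →ₗ[ℝ] V1) (α : V2 →ₗ[ℝ] V)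
    (W1 W2 : Set (V × V)) (𝒜 : Set V)
    (hW1 : W1 = {p | ∃ (u1 : V1) (l : ℝ), p = ((u1 : V), (A u1 : V) + l • v)})
    (hW2 : W2 = {p | ∃ u2 v2 : V2, p = ((u2 : V), (v2 : V) + α u2)})
    (h𝒜 : 𝒜 = {x | ∃ (w : V) (h1 : w ∈ V1) (h2 : w ∈ V2),
      x = (A ⟨w, h1⟩ : V) - α ⟨w, h2⟩})
    (hsubset : 𝒜 ⊆ (V2 : Set V)) :
    Module.finrank ℝ ((V × V) ⧸ (Submodule.span ℝ W1 ⊔ Submodule.span ℝ W2)) = 1 := by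
  subst hW1 hW2 h𝒜
  set q : V →ₗ[ℝ] V ⧸ V2 := V2.mkQ with hq
  set f1 : V1 →ₗ[ℝ] V ⧸ V2 := q ∘ₗ V1.subtype ∘ₗ A with hf1
  set f2 : V2 →ₗ[ℝ] V ⧸ V2 := q ∘ₗ α with hf2
  set P1 : V →ₗ.[ℝ] V ⧸ V2 := ⟨V1, f1⟩ with hP1
  set P2 : V →ₗ.[ℝ] V ⧸ V2 := ⟨V2, f2⟩ with hP2
  have H : ∀ (x : P1.domain) (y : P2.domain), (x : V) = y → P1 x = P2 y := by
    rintro ⟨x, hx1⟩ ⟨y, hy2⟩ hxy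
    simp only at hxy
    subst hxy
    have hmem : (A ⟨x, hx1⟩ : V) - α ⟨x, hy2⟩ ∈ V2 := hsubset ⟨x, hx1, hy2, rfl⟩
    have : q ((A ⟨x, hx1⟩ : V) - α ⟨x, hy2⟩) = 0 := (Submodule.Quotient.mk_eq_zero V2).2 hmem
    have := sub_eq_zero.1 (by simpa [map_sub] using this)
    exact this
  set p := P1.sup P2 H with hp
  have hdom : p.domain = ⊤ := by
    rw [hp, LinearPMap.domain_sup]
    exact hsum
  set B : V →ₗ[ℝ] V ⧸ V2 :=
    p.toFun ∘ₗ (LinearEquiv.ofTop p.domain hdom).symm.toLinearMap with hB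
  have hBsum : ∀ (x1 : V1) (x2 : V2), B ((x1 : V) + x2) = f1 x1 + f2 x2 := by
    intro x1 x2
    have := LinearPMap.sup_apply H x1 x2
      ((LinearEquiv.ofTop p.domain hdom).symm ((x1 : V) + x2)) (by simp)
    exact this
  have hB1 : ∀ (x1 : V1), B (x1 : V) = f1 x1 := by
    intro x1
    have := hBsum x1 0
    simpa using this
  have hB2 : ∀ (x2 : V2), B (x2 : V) = f2 x2 := by
    intro x2
    have := hBsum 0 x2
    simpa using this
  set f : (V × V) →ₗ[ℝ] V ⧸ V2 := B ∘ₗ LinearMap.fst ℝ V V - q ∘ₗ LinearMap.snd ℝ V V with hf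
  have hfapp : ∀ x y : V, f (x, y) = B x - q y := fun x y => rfl
  have hsurj : Function.Surjective f := by
    intro z
    obtain ⟨y, rfl⟩ := V2.mkQ_surjective z
    refine ⟨(0, -y), ?_⟩
    show B 0 - q (-y) = Submodule.Quotient.mk y
    simp [hq]
  have hker : Submodule.span ℝ {p : V × V | ∃ (u1 : V1) (l : ℝ), p = ((u1 : V), (A u1 : V) + l • v)}
      ⊔ Submodule.span ℝ {p : V × V | ∃ u2 v2 : V2, p = ((u2 : V), (v2 : V) + α u2)}
      = LinearMap.ker f := by
    apply le_antisymm
    · apply sup_le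
      · rw [Submodule.span_le]
        rintro _ ⟨u1, l, rfl⟩
        simp only [SetLike.mem_coe, LinearMap.mem_ker, hfapp]
        have hqv : q v = 0 := (Submodule.Quotient.mk_eq_zero V2).2 hv
        rw [hB1 u1]
        simp only [hf1, LinearMap.comp_apply, Submodule.subtype_apply, map_add, map_smul, hqv,
          smul_zero, add_zero, sub_self]
      · rw [Submodule.span_le]
        rintro _ ⟨u2, v2, rfl⟩
        simp only [SetLike.mem_coe, LinearMap.mem_ker, hfapp]
        have hqv2 : q (v2 : V) = 0 := (Submodule.Quotient.mk_eq_zero V2).2 v2.2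
        rw [hB2 u2]
        simp [hf2, hq, hqv2]
    · rintro ⟨x, y⟩ hxy
      rw [LinearMap.mem_ker, hfapp, sub_eq_zero] at hxy
      have hx : x ∈ V1 ⊔ V2 := by rw [hsum]; trivial
      obtain ⟨x1, hx1, x2, hx2, rfl⟩ := Submodule.mem_sup.1 hx
      have hB' : B (x1 + x2) = q (A ⟨x1, hx1⟩ : V) + q (α ⟨x2, hx2⟩) := hBsum ⟨x1, hx1⟩ ⟨x2, hx2⟩
      have hv2mem : y - ((A ⟨x1, hx1⟩ : V) + α ⟨x2, hx2⟩) ∈ V2 := by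
        rw [← Submodule.Quotient.mk_eq_zero V2]
        have : q (y - ((A ⟨x1, hx1⟩ : V) + α ⟨x2, hx2⟩)) = 0 := by
          rw [map_sub, map_add, ← hB', ← hxy, sub_self]
        exact this
      have hmem1 : ((x1 : V), (A ⟨x1, hx1⟩ : V) + (0:ℝ) • v) ∈
          Submodule.span ℝ {p : V × V | ∃ (u1 : V1) (l : ℝ), p = ((u1 : V), (A u1 : V) + l • v)} :=
        Submodule.subset_span ⟨⟨x1, hx1⟩, 0, rfl⟩
      have hmem2 : ((x2 : V), ((⟨y - ((A ⟨x1, hx1⟩ : V) + α ⟨x2, hx2⟩), hv2mem⟩ : V2) : V)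
          + α ⟨x2, hx2⟩) ∈
          Submodule.span ℝ {p : V × V | ∃ u2 v2 : V2, p = ((u2 : V), (v2 : V) + α u2)} :=
        Submodule.subset_span ⟨⟨x2, hx2⟩, ⟨y - ((A ⟨x1, hx1⟩ : V) + α ⟨x2, hx2⟩), hv2mem⟩, rfl⟩
      have := Submodule.add_mem_sup hmem1 hmem2
      have heq : ((x1 : V), (A (⟨x1, hx1⟩ : V1) : V) + (0:ℝ) • v)
          + ((x2 : V), ((⟨y - ((A ⟨x1, hx1⟩ : V) + α ⟨x2, hx2⟩), hv2mem⟩ : V2) : V) + α ⟨x2, hx2⟩)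
          = (x1 + x2, y) := by
        rw [Prod.mk_add_mk]
        refine Prod.ext rfl ?_
        simp only [zero_smul, add_zero]
        abel
      rwa [heq] at this
  rw [hker]
  rw [(f.quotKerEquivOfSurjective hsurj).finrank_eq]
  exact hcodim
end

section
/- Let x : [a,b] → ℝ^n be an H^1 curve, let φ : ℝ^n → ℝ be a differentiable function with φ(x(s)) ≤ 0 for all s ∈ [a,b], and let K0 > 0 be such that ‖∇φ(x(s))‖ ≤ K0 for all s ∈ [a,b]. Assume φ(x(a)) = 0 and φ(x(b)) = 0, and let δ0 > 0. If (b−a)·∫_a^b ‖ẋ(σ)‖² dσ ≤ δ0²/K0², then φ(x(s)) ≥ −δ0 for all s ∈ [a,b]. -/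
open MeasureTheory Set Filter Topology

lemma key_growth {E : Type*} [NormedAddCommGroup E] [NormedSpace ℝ E]
    (a s : ℝ) (has : a ≤ s) (x x' : ℝ → E)
    (hint : IntegrableOn x' (Icc a s))
    (hFTC : ∀ t ∈ Icc a s, x t = x a + ∫ u in a..t, x' u)
    (ψ : E → ℝ) (hψ : Differentiable ℝ ψ)
    (K0 ε : ℝ) (hK : 0 ≤ K0) (hε : 0 < ε)
    (hbd : ∀ t ∈ Icc a s, ‖fderiv ℝ ψ (x t)‖ ≤ K0) :
    ψ (x s) - ψ (x a) ≤ (K0 + ε) * ∫ u in a..s, ‖x' u‖ := by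
  have huIcc : uIcc a s = Icc a s := uIcc_of_le has
  have hii : ∀ c ∈ Icc a s, ∀ d ∈ Icc a s, IntervalIntegrable x' volume c d := by
    intro c hc d hd
    exact (hint.mono_set (by rw [← huIcc] at hc hd ⊢; exact uIcc_subset_uIcc hc hd)).intervalIntegrable
  have hiin : ∀ c ∈ Icc a s, ∀ d ∈ Icc a s, IntervalIntegrable (fun u => ‖x' u‖) volume c d := by
    intro c hc d hd
    exact (hii c hc d hd).norm
  set h : ℝ → ℝ := fun t => ∫ u in a..t, ‖x' u‖ with hh
  have hxcont : ContinuousOn x (Icc a s) := by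
    have h1 : ContinuousOn (fun t => x a + ∫ u in a..t, x' u) (Icc a s) := by
      refine continuousOn_const.add ?_
      rw [← huIcc]
      exact intervalIntegral.continuousOn_primitive_interval (by rwa [huIcc])
    exact h1.congr hFTC
  have hhcont : ContinuousOn h (Icc a s) := by
    rw [← huIcc]
    exact intervalIntegral.continuousOn_primitive_interval (by rw [huIcc]; exact hint.norm)
  -- the set
  set S : Set ℝ := {t ∈ Icc a s | ψ (x t) - ψ (x a) ≤ (K0 + ε) * h t} with hS
  have haS : a ∈ S := by
    constructor
    · exact ⟨le_refl a, has⟩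
    · simp [hh, intervalIntegral.integral_same]
  have hSclosed : IsClosed S := by
    have : S = Icc a s ∩ {t | ψ (x t) - ψ (x a) - (K0 + ε) * h t ≤ 0} := by
      ext t; simp only [hS, mem_inter_iff, mem_setOf_eq, mem_sep_iff]
      constructor
      · rintro ⟨h1, h2⟩; exact ⟨h1, by linarith⟩
      · rintro ⟨h1, h2⟩; exact ⟨h1, by linarith⟩
    rw [this]
    have hcont : ContinuousOn (fun t => ψ (x t) - ψ (x a) - (K0 + ε) * h t) (Icc a s) :=
      ((hψ.continuous.comp_continuousOn hxcont).sub continuousOn_const).sub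
        (continuousOn_const.mul hhcont)
    exact hcont.preimage_isClosed_of_isClosed isClosed_Icc isClosed_Iic
  have hSbdd : BddAbove S := ⟨s, fun t ht => ht.1.2⟩
  set c := sSup S with hc
  have hcS : c ∈ S := hSclosed.csSup_mem ⟨a, haS⟩ hSbdd
  have hcIcc : c ∈ Icc a s := hcS.1
  -- claim : c = s
  have hcs : c = s := by
    by_contra hne
    have hclt : c < s := lt_of_le_of_ne hcIcc.2 hne
    -- local estimate at c
    set p := x c with hp
    set L := fderiv ℝ ψ p with hL
    have hder : HasFDerivAt ψ L p := (hψ p).hasFDerivAt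
    have hlittle := hder.isLittleO.def hε
    -- transfer along x, within Icc a s
    have hxc : ContinuousWithinAt x (Icc a s) c := hxcont c hcIcc
    have hev : ∀ᶠ t in 𝓝[Icc a s] c,
        ‖ψ (x t) - ψ p - L (x t - p)‖ ≤ ε * ‖x t - p‖ := hxc.eventually hlittle
    have hmono : 𝓝[Ioc c s] c ≤ 𝓝[Icc a s] c :=
      nhdsWithin_mono c (fun t ht => ⟨le_trans hcIcc.1 ht.1.le, ht.2⟩)
    have hev2 : ∀ᶠ t in 𝓝[Ioc c s] c,
        ‖ψ (x t) - ψ p - L (x t - p)‖ ≤ ε * ‖x t - p‖ := hev.filter_mono hmono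
    have hne2 : (𝓝[Ioc c s] c).NeBot := by
      rw [nhdsWithin_Ioc_eq_nhdsGT hclt]
      infer_instance
    have hself : ∀ᶠ t in 𝓝[Ioc c s] c, t ∈ Ioc c s := self_mem_nhdsWithin
    obtain ⟨u, hu1, hu2⟩ := (hev2.and hself).exists
    -- u ∈ S, contradiction with sSup
    have huIcc' : u ∈ Icc a s := ⟨le_trans hcIcc.1 hu2.1.le, hu2.2⟩
    have hxu : x u - p = ∫ v in c..u, x' v := by
      rw [hFTC u huIcc', hp, hFTC c hcIcc]
      rw [add_sub_add_left_eq_sub]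
      exact intervalIntegral.integral_interval_sub_left (hii a ⟨le_refl a, has⟩ u huIcc')
        (hii a ⟨le_refl a, has⟩ c hcIcc)
    have hhu : h u - h c = ∫ v in c..u, ‖x' v‖ :=
      intervalIntegral.integral_interval_sub_left (hiin a ⟨le_refl a, has⟩ u huIcc')
        (hiin a ⟨le_refl a, has⟩ c hcIcc)
    have hdist : ‖x u - p‖ ≤ h u - h c := by
      rw [hxu, hhu]
      exact intervalIntegral.norm_integral_le_integral_norm hu2.1.le
    have hL0 : ‖L (x u - p)‖ ≤ K0 * ‖x u - p‖ := by
      calc ‖L (x u - p)‖ ≤ ‖L‖ * ‖x u - p‖ := L.le_opNorm _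
        _ ≤ K0 * ‖x u - p‖ := by
            exact mul_le_mul_of_nonneg_right (hbd c hcIcc) (norm_nonneg _)
    have hstep : ψ (x u) - ψ p ≤ (K0 + ε) * (h u - h c) := by
      have h1 : ψ (x u) - ψ p ≤ ‖ψ (x u) - ψ p - L (x u - p)‖ + ‖L (x u - p)‖ := by
        have := norm_add_le (ψ (x u) - ψ p - L (x u - p)) (L (x u - p))
        simp only [sub_add_cancel] at this
        calc ψ (x u) - ψ p ≤ ‖ψ (x u) - ψ p‖ := le_abs_self _
          _ ≤ _ := this
      calc ψ (x u) - ψ p ≤ ε * ‖x u - p‖ + K0 * ‖x u - p‖ := by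
            refine h1.trans (add_le_add hu1 hL0)
        _ = (K0 + ε) * ‖x u - p‖ := by ring
        _ ≤ (K0 + ε) * (h u - h c) := by
            exact mul_le_mul_of_nonneg_left hdist (by linarith)
    have huS : u ∈ S := by
      refine ⟨huIcc', ?_⟩
      have := hcS.2
      calc ψ (x u) - ψ (x a) = (ψ (x u) - ψ p) + (ψ p - ψ (x a)) := by ring
        _ ≤ (K0 + ε) * (h u - h c) + (K0 + ε) * h c := add_le_add hstep this
        _ = (K0 + ε) * h u := by ring
    exact absurd (le_csSup hSbdd huS) (not_le.mpr hu2.1)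
  have := hcS.2
  rw [hcs] at this
  exact this


set_option maxHeartbeats 1000000 in
/-- Corollary, "small strip": for an `H¹` curve `x : [a,b] → ℝⁿ` (encoded
by the FTC representation with square-integrable a.e. derivative `x'`) with
`φ(x(s)) ≤ 0` on `[a,b]`, `‖∇φ(x(s))‖ ≤ K0`, `φ(x(a)) = φ(x(b)) = 0`: if
`(b-a) ∫_a^b ‖ẋ‖² ≤ δ0²/K0²` then `φ(x(s)) ≥ -δ0` on `[a,b]`. -/
theorem phi_ge_neg_delta_of_small_energy
    {n : ℕ} (a b : ℝ) (hab : a ≤ b)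
    (x x' : ℝ → EuclideanSpace ℝ (Fin n))
    (hL2 : MemLp x' 2 (volume.restrict (Icc a b)))
    (hFTC : ∀ t ∈ Icc a b, x t = x a + ∫ s in a..t, x' s)
    (φ : EuclideanSpace ℝ (Fin n) → ℝ) (hφ : Differentiable ℝ φ)
    (hnonpos : ∀ s ∈ Icc a b, φ (x s) ≤ 0)
    (K0 : ℝ) (hK0 : 0 < K0)
    (hgrad : ∀ s ∈ Icc a b, ‖gradient φ (x s)‖ ≤ K0)
    (ha : φ (x a) = 0) (hb : φ (x b) = 0)
    (δ0 : ℝ) (hδ0 : 0 < δ0)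
    (hsmall : (b - a) * (∫ σ in a..b, ‖x' σ‖ ^ 2) ≤ δ0 ^ 2 / K0 ^ 2) :
    ∀ s ∈ Icc a b, -δ0 ≤ φ (x s) := by

  intro s hs
  haveI hfin : IsFiniteMeasure (volume.restrict (Icc a b)) :=
    ⟨by rw [Measure.restrict_apply_univ]; exact measure_Icc_lt_top⟩
  haveI hfin2 : IsFiniteMeasure (volume.restrict (Ioc a b)) :=
    ⟨by rw [Measure.restrict_apply_univ]; exact measure_Ioc_lt_top⟩
  have hint : IntegrableOn x' (Icc a b) := hL2.integrable one_le_two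
  -- norms of fderiv
  have hfd : ∀ t ∈ Icc a b, ‖fderiv ℝ (fun y => -φ y) (x t)‖ ≤ K0 := by
    intro t ht
    have h1 : fderiv ℝ (fun y => -φ y) (x t) = -(fderiv ℝ φ (x t)) := fderiv_neg
    rw [h1, norm_neg]
    have h2 : ‖gradient φ (x t)‖ = ‖fderiv ℝ φ (x t)‖ := by
      rw [gradient]; exact LinearIsometryEquiv.norm_map _ _
    rw [← h2]; exact hgrad t ht
  set I : ℝ := ∫ u in a..b, ‖x' u‖ with hI
  have hInn : 0 ≤ I :=
    intervalIntegral.integral_nonneg hab (fun u _ => norm_nonneg _)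
  -- step 1 : -φ (x s) ≤ (K0 + ε) * I for all ε > 0
  have step1 : ∀ ε > 0, -φ (x s) ≤ (K0 + ε) * I := by
    intro ε hε
    have hsub : Icc a s ⊆ Icc a b := Icc_subset_Icc le_rfl hs.2
    have key := key_growth a s hs.1 x x' (hint.mono_set hsub)
      (fun t ht => hFTC t (hsub ht)) (fun y => -φ y) hφ.neg K0 ε hK0.le hε
      (fun t ht => hfd t (hsub ht))
    simp only [ha, neg_zero, sub_zero] at key
    refine key.trans ?_
    refine mul_le_mul_of_nonneg_left ?_ (by linarith)
    have h0 : IntegrableOn (fun u => ‖x' u‖) (Icc a b) := hint.norm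
    have h1 : IntervalIntegrable (fun u => ‖x' u‖) volume a b := by
      rw [intervalIntegrable_iff_integrableOn_Ioc_of_le hab]
      exact h0.mono_set Ioc_subset_Icc_self
    exact intervalIntegral.integral_mono_interval le_rfl hs.1 hs.2
      (Eventually.of_forall fun u => norm_nonneg _) h1
  -- step 2 : -φ (x s) ≤ K0 * I
  have step2 : -φ (x s) ≤ K0 * I := by
    refine le_of_forall_pos_le_add fun ε hε => ?_
    rcases eq_or_lt_of_le hInn with hI0 | hIpos
    · have := step1 1 one_pos
      rw [← hI0] at this ⊢
      simpa using this.trans (by linarith)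
    · have := step1 (ε / I) (div_pos hε hIpos)
      calc -φ (x s) ≤ (K0 + ε / I) * I := this
        _ = K0 * I + ε := by field_simp
  -- step 3 : Hölder, K0 * I ≤ δ0
  set μ := volume.restrict (Ioc a b) with hμ
  set J : ℝ := ∫ σ in a..b, ‖x' σ‖ ^ 2 with hJ
  have hJnn : 0 ≤ J :=
    intervalIntegral.integral_nonneg hab (fun u _ => sq_nonneg _)
  have hpq : Real.HolderConjugate 2 2 := Real.holderConjugate_iff.mpr ⟨one_lt_two, by norm_num⟩
  have hμle : μ ≤ volume.restrict (Icc a b) :=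
    Measure.restrict_mono Ioc_subset_Icc_self le_rfl
  have hf2 : MemLp (fun t => ‖x' t‖) (ENNReal.ofReal 2) μ := by
    rw [show ENNReal.ofReal 2 = 2 by simp]
    exact (hL2.norm).mono_measure hμle
  have hg2 : MemLp (fun _ : ℝ => (1 : ℝ)) (ENNReal.ofReal 2) μ := memLp_const 1
  have hold := integral_mul_le_Lp_mul_Lq_of_nonneg hpq
    (Eventually.of_forall fun t => norm_nonneg (x' t))
    (Eventually.of_forall fun _ => zero_le_one) hf2 hg2
  have hconst : ∫ _ : ℝ, (1 : ℝ) ^ (2 : ℝ) ∂μ = b - a := by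
    simp only [Real.one_rpow]
    rw [integral_const, smul_eq_mul, mul_one, hμ, measureReal_def, Measure.restrict_apply_univ,
      Real.volume_Ioc, ENNReal.toReal_ofReal (by linarith)]
  have hIμ : I = ∫ t, ‖x' t‖ * 1 ∂μ := by
    rw [hI, intervalIntegral.integral_of_le hab]
    simp [hμ]
  have hJμ : J = ∫ t, ‖x' t‖ ^ (2 : ℝ) ∂μ := by
    rw [hJ, intervalIntegral.integral_of_le hab]
    congr 1
    ext t
    rw [← Real.rpow_natCast ‖x' t‖ 2]
    norm_num
  have hCS : I ≤ J ^ (1 / 2 : ℝ) * (b - a) ^ (1 / 2 : ℝ) := by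
    rw [hIμ, hJμ]
    calc (∫ t, ‖x' t‖ * 1 ∂μ)
        ≤ (∫ t, ‖x' t‖ ^ (2:ℝ) ∂μ) ^ (1/2:ℝ) * (∫ _ : ℝ, (1:ℝ) ^ (2:ℝ) ∂μ) ^ (1/2:ℝ) := hold
      _ = (∫ t, ‖x' t‖ ^ (2:ℝ) ∂μ) ^ (1/2:ℝ) * (b - a) ^ (1/2:ℝ) := by rw [hconst]
  have hsq : ∀ z : ℝ, 0 ≤ z → (z ^ (1/2 : ℝ)) ^ 2 = z := by
    intro z hz
    rw [← Real.rpow_natCast (z ^ (1/2:ℝ)) 2, ← Real.rpow_mul hz]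
    norm_num
  set R : ℝ := J ^ (1 / 2 : ℝ) * (b - a) ^ (1 / 2 : ℝ) with hR
  have hRnn : 0 ≤ R :=
    mul_nonneg (Real.rpow_nonneg hJnn _) (Real.rpow_nonneg (by linarith) _)
  have hRsq : R ^ 2 = J * (b - a) := by
    rw [hR, mul_pow, hsq J hJnn, hsq (b - a) (by linarith)]
  have hRb : K0 ^ 2 * R ^ 2 ≤ δ0 ^ 2 := by
    rw [hRsq]
    have h1 : K0 ^ 2 * (J * (b - a)) ≤ K0 ^ 2 * (δ0 ^ 2 / K0 ^ 2) := by
      refine mul_le_mul_of_nonneg_left ?_ (sq_nonneg _)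
      calc J * (b - a) = (b - a) * J := mul_comm _ _
        _ ≤ δ0 ^ 2 / K0 ^ 2 := hsmall
    calc K0 ^ 2 * (J * (b - a)) ≤ K0 ^ 2 * (δ0 ^ 2 / K0 ^ 2) := h1
      _ = δ0 ^ 2 := by field_simp
  have step3 : K0 * I ≤ δ0 := by
    have h1 : K0 * I ≤ K0 * R := mul_le_mul_of_nonneg_left hCS hK0.le
    nlinarith [mul_nonneg hK0.le hRnn]
  linarith [step2, step3]
end
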